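/- Let α_1, α_2, α_3 be distinct nonzero elements of a field of characteristic zero with no ratio α_i/α_j (i ≠ j) a root of unity, and let X^{(1)}, X^{(2)} be the impulse sequences of order 3 with characteristic polynomial (x−α_1)(x−α_2)(x−α_3) and initial conditions X^{(1)} = (0,1,0), X^{(2)} = (0,0,1). Then for all n ≥ 1, X_n^{(1)} X_{2n}^{(2)} − X_n^{(2)} X_{2n}^{(1)} = ∏_{1 ≤ i < j ≤ 3} (α_j^n − α_i^n)/(α_j − α_i). -/

import Mathlib

/-- The `r = 3` case of the generalized Vandermonde identity for impulse
sequences: `X_n^{(1)} X_{2n}^{(2)} - X_n^{(2)} X_{2n}^{(1)} = ∏_{i<j} (α_j^n - α_i^n)/(α_j - α_i)`. -/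
theorem impulse_order_three_identity
    {F : Type*} [Field F] [CharZero F]
    (α₁ α₂ α₃ : F) (h1 : α₁ ≠ 0) (h2 : α₂ ≠ 0) (h3 : α₃ ≠ 0)
    (h12 : α₁ ≠ α₂) (h13 : α₁ ≠ α₃) (h23 : α₂ ≠ α₃)
    (hnd12 : ∀ k : ℕ, 1 ≤ k → (α₁ / α₂) ^ k ≠ 1)
    (hnd13 : ∀ k : ℕ, 1 ≤ k → (α₁ / α₃) ^ k ≠ 1)
    (hnd23 : ∀ k : ℕ, 1 ≤ k → (α₂ / α₃) ^ k ≠ 1)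
    (X₁ X₂ : ℕ → F)
    (hrec₁ : ∀ n : ℕ, X₁ (n + 3) = (α₁ + α₂ + α₃) * X₁ (n + 2)
        - (α₁ * α₂ + α₁ * α₃ + α₂ * α₃) * X₁ (n + 1) + α₁ * α₂ * α₃ * X₁ n)
    (hrec₂ : ∀ n : ℕ, X₂ (n + 3) = (α₁ + α₂ + α₃) * X₂ (n + 2)
        - (α₁ * α₂ + α₁ * α₃ + α₂ * α₃) * X₂ (n + 1) + α₁ * α₂ * α₃ * X₂ n)
    (hX₁ : X₁ 0 = 0 ∧ X₁ 1 = 1 ∧ X₁ 2 = 0)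
    (hX₂ : X₂ 0 = 0 ∧ X₂ 1 = 0 ∧ X₂ 2 = 1) :
    ∀ n : ℕ, 1 ≤ n →
      X₁ n * X₂ (2 * n) - X₂ n * X₁ (2 * n) =
        ((α₂ ^ n - α₁ ^ n) / (α₂ - α₁)) * ((α₃ ^ n - α₁ ^ n) / (α₃ - α₁)) *
          ((α₃ ^ n - α₂ ^ n) / (α₃ - α₂)) := by
  have d12 : α₁ - α₂ ≠ 0 := sub_ne_zero.mpr h12
  have d13 : α₁ - α₃ ≠ 0 := sub_ne_zero.mpr h13
  have d23 : α₂ - α₃ ≠ 0 := sub_ne_zero.mpr h23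
  have d21 : α₂ - α₁ ≠ 0 := sub_ne_zero.mpr h12.symm
  have d31 : α₃ - α₁ ≠ 0 := sub_ne_zero.mpr h13.symm
  have d32 : α₃ - α₂ ≠ 0 := sub_ne_zero.mpr h23.symm
  have hΔ : (α₁ - α₂) * (α₁ - α₃) * (α₂ - α₃) ≠ 0 :=
    mul_ne_zero (mul_ne_zero d12 d13) d23
  have hΔ' : (α₂ - α₁) * (α₃ - α₁) * (α₃ - α₂) ≠ 0 :=
    mul_ne_zero (mul_ne_zero d21 d31) d32
  set f : ℕ → F := fun n =>
    (-(α₂ ^ 2 - α₃ ^ 2) * α₁ ^ n + (α₁ ^ 2 - α₃ ^ 2) * α₂ ^ n - (α₁ ^ 2 - α₂ ^ 2) * α₃ ^ n) /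
      ((α₁ - α₂) * (α₁ - α₃) * (α₂ - α₃)) with hf
  set g : ℕ → F := fun n =>
    ((α₂ - α₃) * α₁ ^ n - (α₁ - α₃) * α₂ ^ n + (α₁ - α₂) * α₃ ^ n) /
      ((α₁ - α₂) * (α₁ - α₃) * (α₂ - α₃)) with hg
  have hXf : ∀ n, X₁ n = f n ∧ X₁ (n + 1) = f (n + 1) ∧ X₁ (n + 2) = f (n + 2) := by
    intro n
    induction n with
    | zero =>
      refine ⟨?_, ?_, ?_⟩
      · rw [hX₁.1, hf]; field_simp; ring
      · rw [hX₁.2.1, hf]; field_simp; ring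
      · rw [hX₁.2.2, hf]; field_simp; ring
    | succ n ih =>
      refine ⟨ih.2.1, ih.2.2, ?_⟩
      have h3' : n + 1 + 2 = n + 3 := by ring
      rw [h3', hrec₁ n, ih.1, ih.2.1, ih.2.2, hf]
      field_simp
      ring
  have hXg : ∀ n, X₂ n = g n ∧ X₂ (n + 1) = g (n + 1) ∧ X₂ (n + 2) = g (n + 2) := by
    intro n
    induction n with
    | zero =>
      refine ⟨?_, ?_, ?_⟩
      · rw [hX₂.1, hg]; field_simp; ring
      · rw [hX₂.2.1, hg]; field_simp; ring
      · rw [hX₂.2.2, hg]; field_simp; ring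
    | succ n ih =>
      refine ⟨ih.2.1, ih.2.2, ?_⟩
      have h3' : n + 1 + 2 = n + 3 := by ring
      rw [h3', hrec₂ n, ih.1, ih.2.1, ih.2.2, hg]
      field_simp
      ring
  intro n _
  rw [(hXf n).1, (hXf (2 * n)).1, (hXg n).1, (hXg (2 * n)).1, hf, hg]
  simp only [pow_mul']
  generalize α₁ ^ n = a
  generalize α₂ ^ n = b
  generalize α₃ ^ n = c
  rw [div_mul_div_comm, div_mul_div_comm, div_sub_div _ _ (mul_ne_zero hΔ hΔ) (mul_ne_zero hΔ hΔ),
    div_mul_div_comm, div_mul_div_comm,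
    div_eq_div_iff (mul_ne_zero (mul_ne_zero hΔ hΔ) (mul_ne_zero hΔ hΔ)) hΔ']
  ring
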